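/- Let B be a bialgebra over a commutative ring k, A a k-algebra and k-coalgebra, and ψ : B⊗A → A⊗B, φ : A⊗B → B⊗A k-linear maps such that A #_ψ^φ B is a cross product bialgebra. If ψ is left conormal (i.e. (ε_A ⊗ id_B)ψ(b⊗a) = ε_A(a)·b for all a,b), then the map π : A⊗B → B, π(a⊗b) = ε_A(a) b, is a bialgebra homomorphism from H = A #_ψ^φ B to B, the map i : B → A⊗B, i(b) = 1_A ⊗ b, is an algebra homomorphism, and π ∘ i = id_B. -/

import Mathlib

set_option maxHeartbeats 1000000
set_option synthInstance.maxHeartbeats 400000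


open TensorProduct

variable {k A B : Type*} [CommRing k] [Ring A] [Algebra k A] [Coalgebra k A]
  [Ring B] [Bialgebra k B]

/-- The cross product multiplication on `A ⊗ B` induced by `ψ : B ⊗ A → A ⊗ B`. -/
noncomputable def crossMul (ψ : B ⊗[k] A →ₗ[k] A ⊗[k] B) :
    (A ⊗[k] B) ⊗[k] (A ⊗[k] B) →ₗ[k] A ⊗[k] B :=
  TensorProduct.map (LinearMap.mul' k A) (LinearMap.mul' k B) ∘ₗ
    (TensorProduct.assoc k (A ⊗[k] A) B B).toLinearMap ∘ₗ
    TensorProduct.map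
      ((TensorProduct.assoc k A A B).symm.toLinearMap ∘ₗ
        TensorProduct.map (LinearMap.id : A →ₗ[k] A) ψ ∘ₗ
        (TensorProduct.assoc k A B A).toLinearMap)
      (LinearMap.id : B →ₗ[k] B) ∘ₗ
    (TensorProduct.assoc k (A ⊗[k] B) A B).symm.toLinearMap

/-- (a): `ψ ∘ (m_B ⊗ id_A) = (id_A ⊗ m_B) ∘ (ψ ⊗ id_B) ∘ (id_B ⊗ ψ)`. -/
def psiCondA (ψ : B ⊗[k] A →ₗ[k] A ⊗[k] B) : Prop :=
  ψ ∘ₗ TensorProduct.map (LinearMap.mul' k B) (LinearMap.id : A →ₗ[k] A) =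
    TensorProduct.map (LinearMap.id : A →ₗ[k] A) (LinearMap.mul' k B) ∘ₗ
      (TensorProduct.assoc k A B B).toLinearMap ∘ₗ
      TensorProduct.map ψ (LinearMap.id : B →ₗ[k] B) ∘ₗ
      (TensorProduct.assoc k B A B).symm.toLinearMap ∘ₗ
      TensorProduct.map (LinearMap.id : B →ₗ[k] B) ψ ∘ₗ
      (TensorProduct.assoc k B B A).toLinearMap

/-- (b): `ψ ∘ (id_B ⊗ m_A) = (m_A ⊗ id_B) ∘ (id_A ⊗ ψ) ∘ (ψ ⊗ id_A)`. -/
def psiCondB (ψ : B ⊗[k] A →ₗ[k] A ⊗[k] B) : Prop :=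
  ψ ∘ₗ TensorProduct.map (LinearMap.id : B →ₗ[k] B) (LinearMap.mul' k A) =
    TensorProduct.map (LinearMap.mul' k A) (LinearMap.id : B →ₗ[k] B) ∘ₗ
      (TensorProduct.assoc k A A B).symm.toLinearMap ∘ₗ
      TensorProduct.map (LinearMap.id : A →ₗ[k] A) ψ ∘ₗ
      (TensorProduct.assoc k A B A).toLinearMap ∘ₗ
      TensorProduct.map ψ (LinearMap.id : A →ₗ[k] A) ∘ₗ
      (TensorProduct.assoc k B A A).symm.toLinearMap

/-- (c): `ψ(b ⊗ 1_A) = 1_A ⊗ b`. -/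
def psiCondC (ψ : B ⊗[k] A →ₗ[k] A ⊗[k] B) : Prop :=
  ∀ b : B, ψ (b ⊗ₜ[k] (1 : A)) = (1 : A) ⊗ₜ[k] b

/-- (d): `ψ(1_B ⊗ a) = a ⊗ 1_B`. -/
def psiCondD (ψ : B ⊗[k] A →ₗ[k] A ⊗[k] B) : Prop :=
  ∀ a : A, ψ ((1 : B) ⊗ₜ[k] a) = a ⊗ₜ[k] (1 : B)

/-- The cross coproduct comultiplication on `A ⊗ B` induced by `φ : A ⊗ B → B ⊗ A`. -/
noncomputable def crossComul (φ : A ⊗[k] B →ₗ[k] B ⊗[k] A) :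
    A ⊗[k] B →ₗ[k] (A ⊗[k] B) ⊗[k] (A ⊗[k] B) :=
  (TensorProduct.assoc k (A ⊗[k] B) A B).toLinearMap ∘ₗ
    TensorProduct.map
      ((TensorProduct.assoc k A B A).symm.toLinearMap ∘ₗ
        TensorProduct.map (LinearMap.id : A →ₗ[k] A) φ ∘ₗ
        (TensorProduct.assoc k A A B).toLinearMap)
      (LinearMap.id : B →ₗ[k] B) ∘ₗ
    (TensorProduct.assoc k (A ⊗[k] A) B B).symm.toLinearMap ∘ₗ
    TensorProduct.map (Coalgebra.comul (R := k) (A := A)) (Coalgebra.comul (R := k) (A := B))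

/-- The counit `ε_A ⊗ ε_B` on `A ⊗ B`. -/
noncomputable def crossCounit : A ⊗[k] B →ₗ[k] k :=
  (TensorProduct.lid k k).toLinearMap ∘ₗ
    TensorProduct.map (Coalgebra.counit (R := k) (A := A)) (Coalgebra.counit (R := k) (A := B))

/-- (a): `(Δ_B ⊗ id_A) ∘ φ = (id_B ⊗ φ) ∘ (φ ⊗ id_B) ∘ (id_A ⊗ Δ_B)`. -/
def phiCondA (φ : A ⊗[k] B →ₗ[k] B ⊗[k] A) : Prop :=
  TensorProduct.map (Coalgebra.comul (R := k) (A := B)) (LinearMap.id : A →ₗ[k] A) ∘ₗ φ =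
    (TensorProduct.assoc k B B A).symm.toLinearMap ∘ₗ
      TensorProduct.map (LinearMap.id : B →ₗ[k] B) φ ∘ₗ
      (TensorProduct.assoc k B A B).toLinearMap ∘ₗ
      TensorProduct.map φ (LinearMap.id : B →ₗ[k] B) ∘ₗ
      (TensorProduct.assoc k A B B).symm.toLinearMap ∘ₗ
      TensorProduct.map (LinearMap.id : A →ₗ[k] A) (Coalgebra.comul (R := k) (A := B))

/-- (b): `(id_B ⊗ Δ_A) ∘ φ = (φ ⊗ id_A) ∘ (id_A ⊗ φ) ∘ (Δ_A ⊗ id_B)`. -/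
def phiCondB (φ : A ⊗[k] B →ₗ[k] B ⊗[k] A) : Prop :=
  TensorProduct.map (LinearMap.id : B →ₗ[k] B) (Coalgebra.comul (R := k) (A := A)) ∘ₗ φ =
    (TensorProduct.assoc k B A A).toLinearMap ∘ₗ
      TensorProduct.map φ (LinearMap.id : A →ₗ[k] A) ∘ₗ
      (TensorProduct.assoc k A B A).symm.toLinearMap ∘ₗ
      TensorProduct.map (LinearMap.id : A →ₗ[k] A) φ ∘ₗ
      (TensorProduct.assoc k A A B).toLinearMap ∘ₗ
      TensorProduct.map (Coalgebra.comul (R := k) (A := A)) (LinearMap.id : B →ₗ[k] B)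

/-- (c): `(id_B ⊗ ε_A) ∘ φ = ε_A ⊗ id_B`. -/
def phiCondC (φ : A ⊗[k] B →ₗ[k] B ⊗[k] A) : Prop :=
  (TensorProduct.rid k B).toLinearMap ∘ₗ
      TensorProduct.map (LinearMap.id : B →ₗ[k] B) (Coalgebra.counit (R := k) (A := A)) ∘ₗ φ =
    (TensorProduct.lid k B).toLinearMap ∘ₗ
      TensorProduct.map (Coalgebra.counit (R := k) (A := A)) (LinearMap.id : B →ₗ[k] B)

/-- (d): `(ε_B ⊗ id_A) ∘ φ = id_A ⊗ ε_B`. -/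
def phiCondD (φ : A ⊗[k] B →ₗ[k] B ⊗[k] A) : Prop :=
  (TensorProduct.lid k A).toLinearMap ∘ₗ
      TensorProduct.map (Coalgebra.counit (R := k) (A := B)) (LinearMap.id : A →ₗ[k] A) ∘ₗ φ =
    (TensorProduct.rid k A).toLinearMap ∘ₗ
      TensorProduct.map (LinearMap.id : A →ₗ[k] A) (Coalgebra.counit (R := k) (A := B))

/-- `A ⊗ B` with the cross product multiplication induced by `ψ`, unit `1 ⊗ 1`, the cross
coproduct comultiplication induced by `φ` and counit `ε_A ⊗ ε_B` is a bialgebra. -/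
def IsCrossBialgebra (ψ : B ⊗[k] A →ₗ[k] A ⊗[k] B) (φ : A ⊗[k] B →ₗ[k] B ⊗[k] A) : Prop :=
  (∀ x y z : A ⊗[k] B,
      crossMul ψ (crossMul ψ (x ⊗ₜ[k] y) ⊗ₜ[k] z) =
        crossMul ψ (x ⊗ₜ[k] crossMul ψ (y ⊗ₜ[k] z))) ∧
  (∀ x : A ⊗[k] B, crossMul ψ (((1 : A) ⊗ₜ[k] (1 : B)) ⊗ₜ[k] x) = x) ∧
  (∀ x : A ⊗[k] B, crossMul ψ (x ⊗ₜ[k] ((1 : A) ⊗ₜ[k] (1 : B))) = x) ∧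
  ((TensorProduct.assoc k (A ⊗[k] B) (A ⊗[k] B) (A ⊗[k] B)).toLinearMap ∘ₗ
      TensorProduct.map (crossComul φ) (LinearMap.id : A ⊗[k] B →ₗ[k] A ⊗[k] B) ∘ₗ
        crossComul φ =
      TensorProduct.map (LinearMap.id : A ⊗[k] B →ₗ[k] A ⊗[k] B) (crossComul φ) ∘ₗ
        crossComul φ) ∧
  ((TensorProduct.lid k (A ⊗[k] B)).toLinearMap ∘ₗ
      TensorProduct.map (crossCounit (k := k) (A := A) (B := B))
        (LinearMap.id : A ⊗[k] B →ₗ[k] A ⊗[k] B) ∘ₗ crossComul φ = LinearMap.id) ∧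
  ((TensorProduct.rid k (A ⊗[k] B)).toLinearMap ∘ₗ
      TensorProduct.map (LinearMap.id : A ⊗[k] B →ₗ[k] A ⊗[k] B)
        (crossCounit (k := k) (A := A) (B := B)) ∘ₗ crossComul φ = LinearMap.id) ∧
  (crossComul φ ((1 : A) ⊗ₜ[k] (1 : B)) =
      ((1 : A) ⊗ₜ[k] (1 : B)) ⊗ₜ[k] ((1 : A) ⊗ₜ[k] (1 : B))) ∧
  (crossCounit (k := k) (A := A) (B := B) ((1 : A) ⊗ₜ[k] (1 : B)) = 1) ∧
  (crossComul φ ∘ₗ crossMul ψ =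
      TensorProduct.map (crossMul ψ) (crossMul ψ) ∘ₗ
        (TensorProduct.tensorTensorTensorComm k (A ⊗[k] B) (A ⊗[k] B) (A ⊗[k] B)
          (A ⊗[k] B)).toLinearMap ∘ₗ
        TensorProduct.map (crossComul φ) (crossComul φ)) ∧
  (crossCounit (k := k) (A := A) (B := B) ∘ₗ crossMul ψ =
      LinearMap.mul' k k ∘ₗ
        TensorProduct.map (crossCounit (k := k) (A := A) (B := B))
          (crossCounit (k := k) (A := A) (B := B)))

/-- The projection `π(a ⊗ b) = ε_A(a) b`. -/
noncomputable def crossProj : A ⊗[k] B →ₗ[k] B :=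
  (TensorProduct.lid k B).toLinearMap ∘ₗ
    TensorProduct.map (Coalgebra.counit (R := k) (A := A)) (LinearMap.id : B →ₗ[k] B)


section Aux

open Coalgebra LinearMap

variable (ψ : B ⊗[k] A →ₗ[k] A ⊗[k] B) (φ : A ⊗[k] B →ₗ[k] B ⊗[k] A)

/-- `q(c ⊗ d) = ε_A(d) • c`. -/
noncomputable def qmap : B ⊗[k] A →ₗ[k] B :=
  (TensorProduct.rid k B).toLinearMap ∘ₗ LinearMap.lTensor B (Coalgebra.counit (R := k) (A := A))

@[simp] lemma qmap_tmul (c : B) (d : A) :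
    qmap (c ⊗ₜ[k] d) = Coalgebra.counit (R := k) d • c := by
  simp [qmap]

@[simp] lemma crossProj_tmul (a : A) (b : B) :
    crossProj (k := k) (A := A) (B := B) (a ⊗ₜ[k] b) = Coalgebra.counit (R := k) a • b := by
  simp [crossProj]

@[simp] lemma crossCounit_tmul (a : A) (b : B) :
    crossCounit (k := k) (A := A) (B := B) (a ⊗ₜ[k] b) =
      Coalgebra.counit (R := k) a * Coalgebra.counit (R := k) b := by
  simp [crossCounit, smul_eq_mul]

lemma aux_mul (a : A) (b' : B) (t : A ⊗[k] B) :
    TensorProduct.map (LinearMap.mul' k A) (LinearMap.mul' k B)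
      ((TensorProduct.assoc k (A ⊗[k] A) B B)
        (((TensorProduct.assoc k A A B).symm (a ⊗ₜ[k] t)) ⊗ₜ[k] b')) =
      TensorProduct.map (LinearMap.mulLeft k a) (LinearMap.mulRight k b') t := by
  induction t using TensorProduct.induction_on with
  | zero => simp
  | tmul p q => simp [LinearMap.mul'_apply]
  | add x y hx hy => simp [TensorProduct.tmul_add, TensorProduct.add_tmul, hx, hy]

lemma crossMul_tmul (a a' : A) (b b' : B) :
    crossMul ψ ((a ⊗ₜ[k] b) ⊗ₜ[k] (a' ⊗ₜ[k] b')) =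
      TensorProduct.map (LinearMap.mulLeft k a) (LinearMap.mulRight k b') (ψ (b ⊗ₜ[k] a')) := by
  rw [crossMul]
  simp only [LinearMap.comp_apply, LinearEquiv.coe_coe, TensorProduct.assoc_symm_tmul,
    TensorProduct.map_tmul, LinearMap.id_coe, id_eq, TensorProduct.assoc_tmul]
  exact aux_mul a b' (ψ (b ⊗ₜ[k] a'))

lemma proj_mulmap (hmul : ∀ x y : A, Coalgebra.counit (R := k) (x * y) =
      Coalgebra.counit (R := k) x * Coalgebra.counit (R := k) y)
    (a : A) (b' : B) (t : A ⊗[k] B) :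
    crossProj (k := k) (A := A) (B := B)
        (TensorProduct.map (LinearMap.mulLeft k a) (LinearMap.mulRight k b') t) =
      Coalgebra.counit (R := k) a • (crossProj (k := k) (A := A) (B := B) t * b') := by
  induction t using TensorProduct.induction_on with
  | zero => simp
  | tmul p q =>
      simp only [TensorProduct.map_tmul, LinearMap.mulLeft_apply, LinearMap.mulRight_apply,
        crossProj_tmul]
      rw [hmul, mul_smul, smul_mul_assoc]
  | add x y hx hy => simp [hx, hy, map_add, add_mul, smul_add]

lemma crossComul_repr (a : A) (b : B) (ra : Coalgebra.Repr k a (A × A)) (rb : Coalgebra.Repr k b (B × B)) :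
    crossComul φ (a ⊗ₜ[k] b) = ∑ i ∈ ra.index, ∑ j ∈ rb.index,
      (TensorProduct.assoc k (A ⊗[k] B) A B)
        (((TensorProduct.assoc k A B A).symm
          (ra.left i ⊗ₜ[k] φ (ra.right i ⊗ₜ[k] rb.left j))) ⊗ₜ[k] rb.right j) := by
  rw [crossComul]
  simp only [LinearMap.comp_apply, LinearEquiv.coe_coe, TensorProduct.map_tmul,
    ← ra.eq, ← rb.eq, TensorProduct.sum_tmul, TensorProduct.tmul_sum, map_sum,
    LinearMap.id_coe, id_eq, TensorProduct.assoc_symm_tmul, TensorProduct.assoc_tmul]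
  rw [Finset.sum_comm]

lemma eval_pp (x : A) (v : B) (t : B ⊗[k] A) :
    TensorProduct.map (crossProj (k := k) (A := A) (B := B))
        (crossProj (k := k) (A := A) (B := B))
        ((TensorProduct.assoc k (A ⊗[k] B) A B)
          (((TensorProduct.assoc k A B A).symm (x ⊗ₜ[k] t)) ⊗ₜ[k] v)) =
      Coalgebra.counit (R := k) x • ((qmap t : B) ⊗ₜ[k] v) := by
  induction t using TensorProduct.induction_on with
  | zero => simp
  | tmul c d =>
      simp only [TensorProduct.assoc_symm_tmul, TensorProduct.assoc_tmul,
        TensorProduct.map_tmul, crossProj_tmul, qmap_tmul]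
      rw [TensorProduct.smul_tmul_smul, mul_smul, TensorProduct.smul_tmul']
  | add s t hs ht =>
      simp only [TensorProduct.tmul_add, map_add, TensorProduct.add_tmul, hs, ht, smul_add]

lemma eval_counit (x : A) (v : B) (t : B ⊗[k] A) :
    (TensorProduct.rid k (A ⊗[k] B))
        ((TensorProduct.map (LinearMap.id : A ⊗[k] B →ₗ[k] A ⊗[k] B)
            (crossCounit (k := k) (A := A) (B := B)))
          ((TensorProduct.assoc k (A ⊗[k] B) A B)
            (((TensorProduct.assoc k A B A).symm (x ⊗ₜ[k] t)) ⊗ₜ[k] v))) =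
      Coalgebra.counit (R := k) v • (x ⊗ₜ[k] (qmap t : B)) := by
  induction t using TensorProduct.induction_on with
  | zero => simp
  | tmul c d =>
      simp only [TensorProduct.assoc_symm_tmul, TensorProduct.assoc_tmul,
        TensorProduct.map_tmul, crossCounit_tmul, LinearMap.id_coe, id_eq,
        TensorProduct.rid_tmul, qmap_tmul]
      rw [TensorProduct.tmul_smul, mul_comm, mul_smul]
  | add s t hs ht =>
      simp only [TensorProduct.tmul_add, map_add, TensorProduct.add_tmul, hs, ht, smul_add]

lemma repr_counit_smul_right {a : A} (ra : Coalgebra.Repr k a (A × A)) :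
    ∑ i ∈ ra.index, Coalgebra.counit (R := k) (ra.left i) • ra.right i = a := by
  have h := Coalgebra.sum_counit_tmul_eq (R := k) ra
  have h2 := congrArg (TensorProduct.lid k A) h
  rw [map_sum] at h2
  simp only [TensorProduct.lid_tmul] at h2
  simpa using h2

lemma repr_counit_smul_left {b : B} (rb : Coalgebra.Repr k b (B × B)) :
    ∑ j ∈ rb.index, Coalgebra.counit (R := k) (rb.right j) • rb.left j = b := by
  have h := Coalgebra.sum_tmul_counit_eq (R := k) rb
  have h2 := congrArg (TensorProduct.rid k B) h
  rw [map_sum] at h2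
  simp only [TensorProduct.rid_tmul] at h2
  simpa using h2

end Aux

/-- if `A #_ψ^φ B` is a cross product bialgebra and `ψ` is left conormal,
then `π(a⊗b) = ε_A(a)b` is a bialgebra homomorphism, `i(b) = 1⊗b` is an algebra
homomorphism, and `π ∘ i = id_B`. -/
theorem leftConormal_projection_section (ψ : B ⊗[k] A →ₗ[k] A ⊗[k] B)
    (φ : A ⊗[k] B →ₗ[k] B ⊗[k] A) (H : IsCrossBialgebra ψ φ)
    (hconorm : ∀ (b : B) (a : A),
      (TensorProduct.lid k B)
        ((TensorProduct.map (Coalgebra.counit (R := k) (A := A))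
          (LinearMap.id : B →ₗ[k] B)) (ψ (b ⊗ₜ[k] a))) =
        Coalgebra.counit (R := k) a • b) :
    (∀ x y : A ⊗[k] B,
      crossProj (k := k) (A := A) (B := B) (crossMul ψ (x ⊗ₜ[k] y)) =
        crossProj (k := k) (A := A) (B := B) x * crossProj (k := k) (A := A) (B := B) y) ∧
    (crossProj (k := k) (A := A) (B := B) ((1 : A) ⊗ₜ[k] (1 : B)) = 1) ∧
    (∀ h : A ⊗[k] B,
      Coalgebra.comul (R := k) (crossProj (k := k) (A := A) (B := B) h) =
        TensorProduct.map (crossProj (k := k) (A := A) (B := B))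
          (crossProj (k := k) (A := A) (B := B)) (crossComul φ h)) ∧
    (∀ h : A ⊗[k] B,
      Coalgebra.counit (R := k) (crossProj (k := k) (A := A) (B := B) h) =
        crossCounit (k := k) (A := A) (B := B) h) ∧
    (∀ b b' : B,
      crossMul ψ (((1 : A) ⊗ₜ[k] b) ⊗ₜ[k] ((1 : A) ⊗ₜ[k] b')) =
        (1 : A) ⊗ₜ[k] (b * b')) ∧
    (∀ b : B, crossProj (k := k) (A := A) (B := B) ((1 : A) ⊗ₜ[k] b) = b) := by
  obtain ⟨Hassoc, Hlu, Hru, Hcoassoc, Hlcu, Hrcu, Hcomul1, Hcounit1, Hmulc, Hcmul⟩ := H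
  have hproj_psi : ∀ (b : B) (a : A),
      crossProj (k := k) (A := A) (B := B) (ψ (b ⊗ₜ[k] a)) =
        Coalgebra.counit (R := k) a • b := by
    intro b a
    simpa [crossProj] using hconorm b a
  have hεB1 : Coalgebra.counit (R := k) (1 : B) = 1 := Bialgebra.counit_one
  have hεA1 : Coalgebra.counit (R := k) (1 : A) = 1 := by
    have h := Hcounit1
    rw [crossCounit_tmul, hεB1, mul_one] at h
    exact h
  have hpsiD : ∀ a : A, ψ ((1 : B) ⊗ₜ[k] a) = a ⊗ₜ[k] (1 : B) := by
    intro a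
    have h := Hlu (a ⊗ₜ[k] (1 : B))
    rw [crossMul_tmul] at h
    simpa [LinearMap.mulLeft_one, LinearMap.mulRight_one, TensorProduct.map_id] using h
  have hpsiC : ∀ b : B, ψ (b ⊗ₜ[k] (1 : A)) = (1 : A) ⊗ₜ[k] b := by
    intro b
    have h := Hru ((1 : A) ⊗ₜ[k] b)
    rw [crossMul_tmul] at h
    simpa [LinearMap.mulLeft_one, LinearMap.mulRight_one, TensorProduct.map_id] using h
  have hεAmul : ∀ x y : A, Coalgebra.counit (R := k) (x * y) =
      Coalgebra.counit (R := k) x * Coalgebra.counit (R := k) y := by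
    intro x y
    have h := LinearMap.congr_fun Hcmul ((x ⊗ₜ[k] (1 : B)) ⊗ₜ[k] (y ⊗ₜ[k] (1 : B)))
    rw [LinearMap.comp_apply, crossMul_tmul, hpsiD] at h
    simpa [crossCounit_tmul, hεB1, LinearMap.mul'_apply] using h
  -- the left conormality of φ, derived from the right counit axiom
  have hphiC : ∀ (a : A) (b : B), qmap (φ (a ⊗ₜ[k] b)) = Coalgebra.counit (R := k) a • b := by
    intro a b
    set ra := Coalgebra.Repr.arbitrary k a with hra
    set rb := Coalgebra.Repr.arbitrary k b with hrb
    have h := LinearMap.congr_fun Hrcu (a ⊗ₜ[k] b)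
    rw [LinearMap.comp_apply, LinearMap.comp_apply, LinearMap.id_apply,
      crossComul_repr φ a b ra rb] at h
    simp only [map_sum, LinearEquiv.coe_coe, eval_counit] at h
    have hinner : ∀ (x y : A),
        ∑ j ∈ rb.index, Coalgebra.counit (R := k) (rb.right j) •
            (x ⊗ₜ[k] qmap (φ (y ⊗ₜ[k] rb.left j))) =
          x ⊗ₜ[k] qmap (φ (y ⊗ₜ[k] b)) := by
      intro x y
      calc ∑ j ∈ rb.index, Coalgebra.counit (R := k) (rb.right j) •
              (x ⊗ₜ[k] qmap (φ (y ⊗ₜ[k] rb.left j)))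
          = ∑ j ∈ rb.index,
              x ⊗ₜ[k] qmap (φ (y ⊗ₜ[k] (Coalgebra.counit (R := k) (rb.right j) • rb.left j))) :=
            Finset.sum_congr rfl fun j _ => by
              simp only [TensorProduct.tmul_smul, map_smul]
        _ = x ⊗ₜ[k] qmap (φ (y ⊗ₜ[k]
              (∑ j ∈ rb.index, Coalgebra.counit (R := k) (rb.right j) • rb.left j))) := by
            rw [← TensorProduct.tmul_sum, ← map_sum, ← map_sum, ← TensorProduct.tmul_sum]
        _ = x ⊗ₜ[k] qmap (φ (y ⊗ₜ[k] b)) := by rw [repr_counit_smul_left rb]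
    simp only [hinner] at h
    have h2 := congrArg (crossProj (k := k) (A := A) (B := B)) h
    rw [map_sum, crossProj_tmul] at h2
    calc qmap (φ (a ⊗ₜ[k] b))
        = qmap (φ ((∑ i ∈ ra.index,
            Coalgebra.counit (R := k) (ra.left i) • ra.right i) ⊗ₜ[k] b)) := by
          rw [repr_counit_smul_right ra]
      _ = ∑ i ∈ ra.index, Coalgebra.counit (R := k) (ra.left i) •
            qmap (φ (ra.right i ⊗ₜ[k] b)) := by
          rw [TensorProduct.sum_tmul, map_sum, map_sum]
          exact Finset.sum_congr rfl fun i _ => by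
            rw [← TensorProduct.smul_tmul', map_smul, map_smul]
      _ = Coalgebra.counit (R := k) a • b := by
          rw [← h2]
          exact Finset.sum_congr rfl fun i _ => (crossProj_tmul _ _).symm
  -- pure tensor multiplicativity of the projection
  have g1pure : ∀ (a a' : A) (b b' : B),
      crossProj (k := k) (A := A) (B := B)
          (crossMul ψ ((a ⊗ₜ[k] b) ⊗ₜ[k] (a' ⊗ₜ[k] b'))) =
        crossProj (k := k) (A := A) (B := B) (a ⊗ₜ[k] b) *
          crossProj (k := k) (A := A) (B := B) (a' ⊗ₜ[k] b') := by
    intro a a' b b'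
    rw [crossMul_tmul, proj_mulmap hεAmul, hproj_psi, crossProj_tmul, crossProj_tmul]
    simp only [smul_mul_assoc, mul_smul_comm]
    rw [smul_comm]
  refine ⟨?_, ?_, ?_, ?_, ?_, ?_⟩
  · -- multiplicativity
    intro x y
    induction x using TensorProduct.induction_on with
    | zero => simp [TensorProduct.zero_tmul]
    | tmul a b =>
        induction y using TensorProduct.induction_on with
        | zero => simp [TensorProduct.tmul_zero]
        | tmul a' b' => exact g1pure a a' b b'
        | add y1 y2 h1 h2 => simp only [TensorProduct.tmul_add, map_add, h1, h2, mul_add]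
    | add x1 x2 h1 h2 => simp only [TensorProduct.add_tmul, map_add, h1, h2, add_mul]
  · -- unitality
    simp [crossProj_tmul, hεA1]
  · -- comultiplicativity
    intro h
    induction h using TensorProduct.induction_on with
    | zero => simp
    | tmul a b =>
        set ra := Coalgebra.Repr.arbitrary k a with hra
        set rb := Coalgebra.Repr.arbitrary k b with hrb
        rw [crossProj_tmul, map_smul, crossComul_repr φ a b ra rb]
        have hεa : ∑ i ∈ ra.index, Coalgebra.counit (R := k) (ra.left i) *
            Coalgebra.counit (R := k) (ra.right i) = Coalgebra.counit (R := k) a := by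
          have h3 := congrArg (Coalgebra.counit (R := k)) (repr_counit_smul_right ra)
          simpa [map_sum, map_smul, smul_eq_mul] using h3
        calc Coalgebra.counit (R := k) a • Coalgebra.comul (R := k) b
            = (∑ i ∈ ra.index, Coalgebra.counit (R := k) (ra.left i) *
                Coalgebra.counit (R := k) (ra.right i)) •
                (∑ j ∈ rb.index, rb.left j ⊗ₜ[k] rb.right j) := by rw [hεa, rb.eq]
          _ = ∑ i ∈ ra.index, ∑ j ∈ rb.index,
                (Coalgebra.counit (R := k) (ra.left i) *
                  Coalgebra.counit (R := k) (ra.right i)) •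
                  (rb.left j ⊗ₜ[k] rb.right j) := by
              rw [Finset.sum_smul]
              exact Finset.sum_congr rfl fun i _ => by rw [Finset.smul_sum]
          _ = TensorProduct.map (crossProj (k := k) (A := A) (B := B))
                (crossProj (k := k) (A := A) (B := B))
                (∑ i ∈ ra.index, ∑ j ∈ rb.index,
                  (TensorProduct.assoc k (A ⊗[k] B) A B)
                    (((TensorProduct.assoc k A B A).symm
                      (ra.left i ⊗ₜ[k] φ (ra.right i ⊗ₜ[k] rb.left j))) ⊗ₜ[k] rb.right j)) := by
              rw [map_sum]
              refine Finset.sum_congr rfl fun i _ => ?_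
              rw [map_sum]
              refine Finset.sum_congr rfl fun j _ => ?_
              rw [eval_pp, hphiC, mul_smul, TensorProduct.smul_tmul']
    | add x y hx hy => simp only [map_add, hx, hy]
  · -- counit compatibility
    intro h
    induction h using TensorProduct.induction_on with
    | zero => simp
    | tmul a b => simp [crossProj_tmul, crossCounit_tmul, smul_eq_mul]
    | add x y hx hy => simp only [map_add, hx, hy]
  · -- i is multiplicative
    intro b b'
    rw [crossMul_tmul, hpsiC]
    simp
  · -- π ∘ i = id
    intro b
    simp [crossProj_tmul, hεA1]
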